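/- Let A ≥ 1, B ≥ 1, c > 0, and let (κ_n), (λ_n), (ξ_n), (η_n) be sequences of nonnegative integers with κ_n/n → 0, λ_n/n → 0, ξ_n/n → 0, η_n/n → 0. Let (g_n) be a sequence of complex numbers with g_0 ≠ 0, |g_n| ≤ B^{κ_n}·(1+t)^{λ_n} for all n, and A^{ξ_n}·(1+t)^{η_n}·|g_n| ≥ c for all sufficiently large n, where t ≥ 0 is fixed. Define h_n = (∑_{k=0}^n |g_k|²·t^{2k}) / (∑_{k=0}^n t^{2k}). Then lim_{n→∞} h_n^{1/n} = 1. -/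

import Mathlib

open Filter Real Finset

lemma aux_sup (f : ℕ → ℕ) (hf : Tendsto (fun n : ℕ => (f n : ℝ) / n) atTop (nhds 0)) :
    Tendsto (fun n : ℕ => (((Finset.range (n+1)).sup f : ℕ) : ℝ) / n) atTop (nhds 0) := by
  rw [NormedAddCommGroup.tendsto_nhds_zero] at hf ⊢
  intro ε hε
  obtain ⟨N, hN⟩ := (hf (ε/2) (by linarith)).exists_forall_of_atTop
  set N' := max N 1 with hN'
  set C := (Finset.range N').sup f with hC
  obtain ⟨M, hM⟩ := exists_nat_gt ((C : ℝ) / ε)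
  filter_upwards [eventually_ge_atTop (max M 1)] with n hn
  have hn1 : 1 ≤ n := le_trans (le_max_right _ _) hn
  have hnM : (M : ℝ) ≤ n := by exact_mod_cast le_trans (le_max_left _ _) hn
  have hnpos : (0:ℝ) < n := by positivity
  obtain ⟨k, hk, hks⟩ := Finset.exists_mem_eq_sup (Finset.range (n+1)) ⟨0, by simp⟩ f
  rw [hks]
  rw [norm_div, Real.norm_natCast, Real.norm_natCast]
  rw [div_lt_iff₀ hnpos]
  by_cases hkN : k < N'
  · have : f k ≤ C := Finset.le_sup (Finset.mem_range.mpr hkN)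
    have h1 : (C : ℝ) < ε * n := by
      have : (C : ℝ) / ε < n := lt_of_lt_of_le hM hnM
      calc (C:ℝ) = (C/ε) * ε := by field_simp
        _ < n * ε := by exact mul_lt_mul_of_pos_right this hε
        _ = ε * n := by ring
    calc ((f k : ℝ)) ≤ (C : ℝ) := by exact_mod_cast this
      _ < ε * n := h1
  · push_neg at hkN
    have hkN2 : N ≤ k := le_trans (le_max_left _ _) hkN
    have hk1 : 1 ≤ k := le_trans (le_max_right _ _) hkN
    have := hN k hkN2
    rw [norm_div, Real.norm_natCast, Real.norm_natCast] at this
    have hkpos : (0:ℝ) < k := by positivity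
    rw [div_lt_iff₀ hkpos] at this
    have hkn : (k:ℝ) ≤ n := by exact_mod_cast Nat.cast_le.mpr (Nat.lt_succ_iff.mp (Finset.mem_range.mp hk))
    calc (f k : ℝ) < ε/2 * k := this
      _ ≤ ε/2 * n := by nlinarith
      _ < ε * n := by nlinarith

lemma aux_const_rpow {K : ℝ} (hK : 0 < K) {a : ℕ → ℝ} (ha : Tendsto a atTop (nhds 0)) :
    Tendsto (fun n => K ^ a n) atTop (nhds 1) := by
  have := (Real.continuousAt_const_rpow (b := (0:ℝ)) (ne_of_gt hK)).tendsto.comp ha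
  simpa [Function.comp_def] using this

lemma aux_nat_rpow : Tendsto (fun n : ℕ => ((n : ℝ) + 1) ^ (1 / (n : ℝ))) atTop (nhds 1) := by
  have h1 : Tendsto (fun n : ℕ => ((n : ℝ) + 1)) atTop atTop :=
    tendsto_atTop_add_const_right atTop 1 tendsto_natCast_atTop_atTop
  have := (tendsto_rpow_div_mul_add 1 1 (-1) (by norm_num)).comp h1
  refine this.congr fun n => ?_
  simp only [Function.comp_apply]
  norm_num

theorem stmt_7 (A B c t : ℝ) (hA : 1 ≤ A) (hB : 1 ≤ B) (hc : 0 < c) (ht : 0 ≤ t)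
    (κ lam ξ η : ℕ → ℕ)
    (hκ : Filter.Tendsto (fun n : ℕ => (κ n : ℝ) / n) Filter.atTop (nhds 0))
    (hlam : Filter.Tendsto (fun n : ℕ => (lam n : ℝ) / n) Filter.atTop (nhds 0))
    (hξ : Filter.Tendsto (fun n : ℕ => (ξ n : ℝ) / n) Filter.atTop (nhds 0))
    (hη : Filter.Tendsto (fun n : ℕ => (η n : ℝ) / n) Filter.atTop (nhds 0))
    (g : ℕ → ℂ) (hg0 : g 0 ≠ 0)
    (hub : ∀ n, ‖g n‖ ≤ B ^ κ n * (1 + t) ^ lam n)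
    (hlb : ∀ᶠ n in Filter.atTop, c ≤ A ^ ξ n * (1 + t) ^ η n * ‖g n‖) :
    Filter.Tendsto
      (fun n : ℕ =>
        ((∑ k ∈ Finset.range (n + 1), ‖g k‖ ^ 2 * t ^ (2 * k)) /
          (∑ k ∈ Finset.range (n + 1), t ^ (2 * k))) ^ (1 / n : ℝ))
      Filter.atTop (nhds 1) := by
  have ht1 : (1:ℝ) ≤ 1 + t := by linarith
  set M := B * (1 + t) with hMdef
  have hM1 : 1 ≤ M := one_le_mul_of_one_le_of_one_le hB ht1
  have hM0 : 0 < M := by linarith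
  set D := A * (1 + t) with hDdef
  have hD1 : 1 ≤ D := one_le_mul_of_one_le_of_one_le hA ht1
  have hD0 : 0 < D := by linarith
  set G := fun k => ‖g k‖ with hGdef
  have hGnn : ∀ k, 0 ≤ G k := fun k => norm_nonneg _
  set S := fun n => ∑ k ∈ Finset.range (n + 1), G k ^ 2 * t ^ (2 * k) with hSdef
  set T := fun n => ∑ k ∈ Finset.range (n + 1), t ^ (2 * k) with hTdef
  set f := fun n => κ n + lam n with hfdef
  set d := fun n => ξ n + η n with hddef
  set m := fun n => (Finset.range (n+1)).sup f with hmdef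
  -- exponent sequences tend to zero
  have hfd : Tendsto (fun n : ℕ => (f n : ℝ) / n) atTop (nhds 0) := by
    have := hκ.add hlam
    simp only [add_zero] at this
    refine this.congr fun n => ?_
    simp [hfdef]; push_cast; ring
  have hdd : Tendsto (fun n : ℕ => (d n : ℝ) / n) atTop (nhds 0) := by
    have := hξ.add hη
    simp only [add_zero] at this
    refine this.congr fun n => ?_
    simp [hddef]; push_cast; ring
  have hm : Tendsto (fun n : ℕ => (m n : ℝ) / n) atTop (nhds 0) := aux_sup f hfd
  -- positivity of sums
  have hT1 : ∀ n, (1:ℝ) ≤ T n := by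
    intro n
    have : (1:ℝ) = t ^ (2 * 0) := by simp
    rw [this]
    exact Finset.single_le_sum (f := fun k => t ^ (2*k))
      (fun k _ => pow_nonneg ht _) (Finset.mem_range.mpr (Nat.succ_pos n))
  have hT0 : ∀ n, (0:ℝ) < T n := fun n => lt_of_lt_of_le one_pos (hT1 n)
  have hS0 : ∀ n, (0:ℝ) ≤ S n :=
    fun n => Finset.sum_nonneg fun k _ => mul_nonneg (sq_nonneg _) (pow_nonneg ht _)
  -- pointwise bound on G
  have hGM : ∀ k, G k ≤ M ^ f k := by
    intro k
    refine le_trans (hub k) ?_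
    rw [hfdef, pow_add]
    have h1 : B ^ κ k ≤ M ^ κ k :=
      pow_le_pow_left₀ (by linarith) (le_mul_of_one_le_right (by linarith) ht1) _
    have h2 : (1+t) ^ lam k ≤ M ^ lam k :=
      pow_le_pow_left₀ (by linarith) (le_mul_of_one_le_left (by linarith) hB) _
    exact mul_le_mul h1 h2 (pow_nonneg (by linarith) _) (pow_nonneg hM0.le _)
  -- upper bound : S n / T n ≤ M ^ (2 * m n)
  have hub2 : ∀ n, S n / T n ≤ M ^ (2 * m n) := by
    intro n
    rw [div_le_iff₀ (hT0 n), hSdef, hTdef, Finset.mul_sum]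
    refine Finset.sum_le_sum fun k hk => ?_
    refine mul_le_mul_of_nonneg_right ?_ (pow_nonneg ht _)
    have h1 : G k ≤ M ^ m n := le_trans (hGM k) (pow_le_pow_right₀ (by linarith) (Finset.le_sup hk))
    calc G k ^ 2 ≤ (M ^ m n) ^ 2 := pow_le_pow_left₀ (hGnn k) h1 2
      _ = M ^ (2 * m n) := by rw [← pow_mul, mul_comm]
  -- lower bound
  set c₀ := min (G 0 ^ 2) (c ^ 2) with hc₀def
  have hG00 : 0 < G 0 := norm_pos_iff.mpr hg0
  have hc₀ : 0 < c₀ := lt_min (by positivity) (by positivity)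
  have hlow : ∀ᶠ n in atTop, c₀ / ((n + 1) * D ^ (2 * d n)) ≤ S n / T n := by
    filter_upwards [hlb] with n hn
    have hDp : (0:ℝ) < D ^ (2 * d n) := pow_pos hD0 _
    have hD1' : (1:ℝ) ≤ D ^ (2 * d n) := one_le_pow₀ hD1
    have hn1 : (0:ℝ) < (n:ℝ) + 1 := by positivity
    by_cases htc : t ≤ 1
    · -- S n ≥ G 0 ^ 2, T n ≤ n + 1
      have hSn : G 0 ^ 2 ≤ S n := by
        have : G 0 ^ 2 = G 0 ^ 2 * t ^ (2 * 0) := by simp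
        rw [this]
        exact Finset.single_le_sum (f := fun k => G k ^ 2 * t ^ (2*k))
          (fun k _ => mul_nonneg (sq_nonneg _) (pow_nonneg ht _))
          (Finset.mem_range.mpr (Nat.succ_pos n))
      have hTn : T n ≤ (n:ℝ) + 1 := by
        have := Finset.sum_le_card_nsmul (Finset.range (n+1)) (fun k => t ^ (2*k)) 1
          (fun k _ => pow_le_one₀ ht htc)
        simpa using this
      calc c₀ / ((n + 1) * D ^ (2 * d n)) ≤ G 0 ^ 2 / ((n:ℝ) + 1) := by
            refine div_le_div₀ (sq_nonneg _) (min_le_left _ _) hn1 ?_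
            exact le_mul_of_one_le_right hn1.le hD1'
        _ ≤ S n / T n := div_le_div₀ (hS0 n) hSn (hT0 n) hTn
    · push_neg at htc
      have ht2 : (0:ℝ) < t := by linarith
      have htn : (0:ℝ) < t ^ (2 * n) := pow_pos ht2 _
      -- G n ≥ c / D ^ (d n)
      have hAD : A ^ ξ n * (1 + t) ^ η n ≤ D ^ d n := by
        rw [hddef, pow_add]
        have h1 : A ^ ξ n ≤ D ^ ξ n :=
          pow_le_pow_left₀ (by linarith) (le_mul_of_one_le_right (by linarith) ht1) _
        have h2 : (1+t) ^ η n ≤ D ^ η n :=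
          pow_le_pow_left₀ (by linarith) (le_mul_of_one_le_left (by linarith) hA) _
        exact mul_le_mul h1 h2 (pow_nonneg (by linarith) _) (pow_nonneg hD0.le _)
      have hcd : c ≤ D ^ d n * G n :=
        le_trans hn (mul_le_mul_of_nonneg_right hAD (hGnn n))
      have hsq : c ^ 2 ≤ D ^ (2 * d n) * G n ^ 2 := by
        have := mul_self_le_mul_self hc.le hcd
        calc c ^ 2 = c * c := sq c
          _ ≤ (D ^ d n * G n) * (D ^ d n * G n) := this
          _ = D ^ (2 * d n) * G n ^ 2 := by rw [two_mul, pow_add]; ring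
      have hGn2 : c ^ 2 / D ^ (2 * d n) ≤ G n ^ 2 := by
        rw [div_le_iff₀ hDp]
        linarith [hsq]
      have hSn : G n ^ 2 * t ^ (2 * n) ≤ S n :=
        Finset.single_le_sum (f := fun k => G k ^ 2 * t ^ (2*k))
          (fun k _ => mul_nonneg (sq_nonneg _) (pow_nonneg ht _))
          (Finset.mem_range.mpr (Nat.lt_succ_self n))
      have hTn : T n ≤ ((n:ℝ) + 1) * t ^ (2 * n) := by
        have := Finset.sum_le_card_nsmul (Finset.range (n+1)) (fun k => t ^ (2*k)) (t ^ (2*n))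
          (fun k hk => pow_le_pow_right₀ (by linarith)
            (by have := Nat.lt_succ_iff.mp (Finset.mem_range.mp hk); omega))
        simpa [nsmul_eq_mul] using this
      calc c₀ / ((n + 1) * D ^ (2 * d n)) ≤ (c ^ 2 / D ^ (2 * d n)) / ((n:ℝ) + 1) := by
            rw [div_div, mul_comm (D ^ (2 * d n))]
            exact div_le_div₀ (sq_nonneg c) (min_le_right _ _) (by positivity) le_rfl
        _ ≤ G n ^ 2 / ((n:ℝ) + 1) := div_le_div₀ (sq_nonneg _) hGn2 hn1 le_rfl
        _ = (G n ^ 2 * t ^ (2*n)) / (((n:ℝ) + 1) * t ^ (2*n)) := by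
            rw [mul_div_mul_right _ _ (ne_of_gt htn)]
        _ ≤ S n / T n := div_le_div₀ (hS0 n) hSn (hT0 n) hTn
  -- limits of the bounding sequences
  have hU : Tendsto (fun n : ℕ => (M ^ (2 * m n) : ℝ) ^ (1 / (n:ℝ))) atTop (nhds 1) := by
    have hexp : Tendsto (fun n : ℕ => ((2 * m n : ℕ) : ℝ) * (1 / (n:ℝ))) atTop (nhds 0) := by
      have := hm.const_mul 2
      simp only [mul_zero] at this
      refine this.congr fun n => ?_
      push_cast; ring
    have := aux_const_rpow hM0 hexp
    refine this.congr fun n => ?_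
    rw [← Real.rpow_natCast M (2 * m n), ← Real.rpow_mul hM0.le]
  have hL : Tendsto (fun n : ℕ => (c₀ / ((n + 1) * D ^ (2 * d n))) ^ (1 / (n:ℝ))) atTop
      (nhds 1) := by
    have h1 : Tendsto (fun n : ℕ => c₀ ^ (1 / (n:ℝ))) atTop (nhds 1) :=
      aux_const_rpow hc₀ tendsto_one_div_atTop_nhds_zero_nat
    have hexp : Tendsto (fun n : ℕ => ((2 * d n : ℕ) : ℝ) * (1 / (n:ℝ))) atTop (nhds 0) := by
      have := hdd.const_mul 2
      simp only [mul_zero] at this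
      refine this.congr fun n => ?_
      push_cast; ring
    have h3 : Tendsto (fun n : ℕ => D ^ (((2 * d n : ℕ) : ℝ) * (1 / (n:ℝ)))) atTop (nhds 1) :=
      aux_const_rpow hD0 hexp
    have h2 := aux_nat_rpow
    have hprod : Tendsto (fun n : ℕ => c₀ ^ (1 / (n:ℝ)) /
        (((n:ℝ) + 1) ^ (1 / (n:ℝ)) * D ^ (((2 * d n : ℕ) : ℝ) * (1 / (n:ℝ))))) atTop (nhds 1) := by
      have := h1.div (h2.mul h3) (by norm_num)
      simpa [Pi.div_def] using this
    refine hprod.congr fun n => ?_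
    have hn1 : (0:ℝ) ≤ (n:ℝ) + 1 := by positivity
    rw [Real.div_rpow hc₀.le (by positivity), Real.mul_rpow hn1 (pow_nonneg hD0.le _),
      ← Real.rpow_natCast D (2 * d n), ← Real.rpow_mul hD0.le]
  -- squeeze
  refine tendsto_of_tendsto_of_tendsto_of_le_of_le' hL hU ?_ ?_
  · filter_upwards [hlow] with n hn
    exact Real.rpow_le_rpow (by positivity) hn (by positivity)
  · filter_upwards with n
    exact Real.rpow_le_rpow (div_nonneg (hS0 n) (hT0 n).le) (hub2 n) (by positivity)
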